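/- Let λ ∈ (0,1) and C ≥ M > 0. Then for every k ≥ 1, Σ_{l=1}^{k} min(M, C λ^{l−1}) ≤ (M/(1−λ)) (log(C/M) + 3). -/

import Mathlib

/-- For `λ ∈ (0,1)` and `C ≥ M > 0`, for every `k ≥ 1`,
`Σ_{l=1}^k min(M, C λ^{l−1}) ≤ (M/(1−λ))(log(C/M) + 3)`. -/
theorem stmt_9 (lam C M : ℝ)
    (hlam0 : 0 < lam) (hlam1 : lam < 1) (hM : 0 < M) (hCM : M ≤ C) :
    ∀ k, 1 ≤ k → ∑ l ∈ Finset.Icc 1 k, min M (C * lam ^ (l - 1)) ≤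
      (M / (1 - lam)) * (Real.log (C / M) + 3) := by
  intro k hk
  have h1m : (0:ℝ) < 1 - lam := by linarith
  have hC : 0 < C := lt_of_lt_of_le hM hCM
  set R := Real.log (C / M) with hRdef
  have hR0 : 0 ≤ R := Real.log_nonneg (by rw [le_div_iff₀ hM]; linarith)
  set T : ℕ := ⌊R / (1 - lam)⌋₊ + 1 with hTdef
  have hTge : R < (T : ℝ) * (1 - lam) := by
    have h := Nat.lt_floor_add_one (R / (1 - lam))
    have : R / (1 - lam) < (T : ℝ) := by push_cast [hTdef]; linarith
    calc R = (R / (1 - lam)) * (1 - lam) := by field_simp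
      _ < (T : ℝ) * (1 - lam) := by nlinarith
  have hTle : (T : ℝ) * (1 - lam) ≤ R + 1 := by
    have h := Nat.floor_le (div_nonneg hR0 h1m.le)
    have hT' : (T : ℝ) ≤ R / (1 - lam) + 1 := by push_cast [hTdef]; linarith
    have : (R / (1 - lam) + 1) * (1 - lam) = R + (1 - lam) := by field_simp
    nlinarith
  -- key: C * lam ^ T ≤ M
  have hpow : C * lam ^ T ≤ M := by
    have hlog : Real.log lam ≤ lam - 1 := Real.log_le_sub_one_of_pos hlam0
    have hTlog : (T : ℝ) * Real.log lam ≤ -R := by nlinarith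
    have h2 : lam ^ T = Real.exp ((T : ℝ) * Real.log lam) := by
      rw [← Real.log_pow, Real.exp_log (pow_pos hlam0 T)]
    have h3 : lam ^ T ≤ Real.exp (-R) := by
      rw [h2]; exact Real.exp_le_exp.mpr hTlog
    have h4 : Real.exp (-R) = M / C := by
      rw [hRdef, Real.exp_neg, Real.exp_log (div_pos hC hM)]
      field_simp
    rw [h4] at h3
    calc C * lam ^ T ≤ C * (M / C) := by
          exact mul_le_mul_of_nonneg_left h3 hC.le
      _ = M := by field_simp
  set K := max k T with hK
  have hTK : T ≤ K := le_max_right _ _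
  have hmono : ∑ l ∈ Finset.Icc 1 k, min M (C * lam ^ (l - 1)) ≤
      ∑ l ∈ Finset.Icc 1 K, min M (C * lam ^ (l - 1)) := by
    apply Finset.sum_le_sum_of_subset_of_nonneg
    · exact Finset.Icc_subset_Icc_right (le_max_left _ _)
    · intro i _ _
      exact le_min hM.le (by positivity)
  have hsplit : ∑ l ∈ Finset.Icc 1 K, min M (C * lam ^ (l - 1)) =
      (∑ l ∈ Finset.Ico 1 (T + 1), min M (C * lam ^ (l - 1))) +
      ∑ l ∈ Finset.Ico (T + 1) (K + 1), min M (C * lam ^ (l - 1)) := by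
    rw [← Finset.Ico_add_one_right_eq_Icc]
    rw [Finset.sum_Ico_consecutive _ (Nat.le_add_left 1 T)
      (Nat.succ_le_succ hTK)]
    rfl
  -- first part
  have hpart1 : ∑ l ∈ Finset.Ico 1 (T + 1), min M (C * lam ^ (l - 1)) ≤
      (T : ℝ) * M := by
    calc ∑ l ∈ Finset.Ico 1 (T + 1), min M (C * lam ^ (l - 1))
        ≤ ∑ _l ∈ Finset.Ico 1 (T + 1), M :=
          Finset.sum_le_sum (fun i _ => min_le_left _ _)
      _ = (T : ℝ) * M := by
          rw [Finset.sum_const, Nat.card_Ico]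
          simp [nsmul_eq_mul]
  -- second part: geometric tail
  have hgeom : ∀ n : ℕ, ∑ j ∈ Finset.range n, lam ^ j ≤ 1 / (1 - lam) := by
    intro n
    have heq : ∑ j ∈ Finset.range n, lam ^ j = (1 - lam ^ n) / (1 - lam) := by
      rw [geom_sum_eq (by intro h; linarith : lam ≠ 1)]
      rw [div_eq_div_iff (by intro h; linarith : lam - 1 ≠ 0) (by positivity)]
      ring
    rw [heq]
    gcongr
    nlinarith [pow_pos hlam0 n]
  have hpart2 : ∑ l ∈ Finset.Ico (T + 1) (K + 1), min M (C * lam ^ (l - 1)) ≤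
      M / (1 - lam) := by
    rw [Finset.sum_Ico_eq_sum_range]
    have hterm : ∀ j ∈ Finset.range (K + 1 - (T + 1)),
        min M (C * lam ^ (T + 1 + j - 1)) ≤ M * lam ^ j := by
      intro j _
      have h1 : T + 1 + j - 1 = T + j := by omega
      rw [h1]
      calc min M (C * lam ^ (T + j)) ≤ C * lam ^ (T + j) := min_le_right _ _
        _ = (C * lam ^ T) * lam ^ j := by rw [pow_add]; ring
        _ ≤ M * lam ^ j :=
            mul_le_mul_of_nonneg_right hpow (by positivity)
    calc ∑ j ∈ Finset.range (K + 1 - (T + 1)), min M (C * lam ^ (T + 1 + j - 1))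
        ≤ ∑ j ∈ Finset.range (K + 1 - (T + 1)), M * lam ^ j :=
          Finset.sum_le_sum hterm
      _ = M * ∑ j ∈ Finset.range (K + 1 - (T + 1)), lam ^ j := by
          rw [Finset.mul_sum]
      _ ≤ M * (1 / (1 - lam)) :=
          mul_le_mul_of_nonneg_left (hgeom _) hM.le
      _ = M / (1 - lam) := by ring
  have hfinal : (T : ℝ) * M + M / (1 - lam) ≤
      (M / (1 - lam)) * (R + 3) := by
    rw [div_mul_eq_mul_div, le_div_iff₀ h1m]
    have hd : M / (1 - lam) * (1 - lam) = M := by field_simp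
    rw [add_mul, hd]
    nlinarith
  calc ∑ l ∈ Finset.Icc 1 k, min M (C * lam ^ (l - 1))
      ≤ ∑ l ∈ Finset.Icc 1 K, min M (C * lam ^ (l - 1)) := hmono
    _ = _ := hsplit
    _ ≤ (T : ℝ) * M + M / (1 - lam) := add_le_add hpart1 hpart2
    _ ≤ (M / (1 - lam)) * (R + 3) := hfinal
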